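/- Differentiation of the arctangent Abel kernel: let 0 < E₀ and let g be continuous on [E₀, E₁] for some E₁ > E₀. Then the function G(E) = ∫_{E₀}^{E} arctan(√((E−u)/u)) · g(u) du is differentiable on (E₀, E₁) with G′(E) = (1/(2E)) ∫_{E₀}^{E} √(u/(E−u)) · g(u) du. -/

import Mathlib

open Set MeasureTheory intervalIntegral Real Filter Topology

set_option maxHeartbeats 1000000

noncomputable def Kk (t u : ℝ) : ℝ := 1/(2*t) * Real.sqrt (u/(t-u))

lemma Kk_zero {t u : ℝ} (hu : 0 < u) (h : t ≤ u) : Kk t u = 0 := by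
  rcases eq_or_lt_of_le h with rfl | h'
  · simp [Kk]
  · have : u / (t - u) ≤ 0 := div_nonpos_of_nonneg_of_nonpos hu.le (by linarith)
    simp [Kk, Real.sqrt_eq_zero'.2 this]

lemma arctan_sqrt_zero {e u : ℝ} (hu : 0 < u) (h : e ≤ u) :
    Real.arctan (Real.sqrt ((e - u) / u)) = 0 := by
  have : (e - u) / u ≤ 0 := div_nonpos_of_nonpos_of_nonneg (by linarith) hu.le
  simp [Real.sqrt_eq_zero'.2 this]

lemma cos_half_pi' : Real.cos (2⁻¹ * π) = 0 := by
  rw [show (2⁻¹:ℝ) * π = π/2 by ring, Real.cos_pi_div_two]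

lemma rpow_half_nonpos {x : ℝ} (hx : x ≤ 0) : x ^ ((1:ℝ)/2) = 0 := by
  rcases eq_or_lt_of_le hx with rfl | h
  · simp [Real.zero_rpow]
  · rw [Real.rpow_def_of_neg h]; simp [cos_half_pi']

lemma rpow_neg_half_nonpos {x : ℝ} (hx : x ≤ 0) : x ^ (-((1:ℝ)/2)) = 0 := by
  rcases eq_or_lt_of_le hx with rfl | h
  · simp [Real.zero_rpow]
  · rw [Real.rpow_def_of_neg h]; simp [cos_half_pi']

lemma inv_sqrt_eq_rpow (x : ℝ) : (Real.sqrt x)⁻¹ = x ^ (-((1:ℝ)/2)) := by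
  rcases le_or_gt x 0 with hx | hx
  · rw [Real.sqrt_eq_zero'.2 hx, inv_zero, rpow_neg_half_nonpos hx]
  · rw [Real.sqrt_eq_rpow, ← Real.rpow_neg hx.le]

/-- Master pointwise bound on the kernel. -/
lemma Kk_abs_le {E₀ E₁ t u : ℝ} (hE₀ : 0 < E₀) (ht : E₀ ≤ t) (hu : 0 < u) (hu' : u ≤ E₁) :
    |Kk t u| ≤ Real.sqrt E₁ / (2*E₀) * (t - u) ^ (-((1:ℝ)/2)) := by
  rcases le_or_gt t u with h | h
  · rw [Kk_zero hu h, abs_zero, rpow_neg_half_nonpos (by linarith)]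
    simp
  · have htu : 0 < t - u := by linarith
    have ht0 : 0 < t := lt_of_lt_of_le hE₀ ht
    have hK : Kk t u = 1/(2*t) * (Real.sqrt u * (t-u) ^ (-((1:ℝ)/2))) := by
      rw [Kk, Real.sqrt_div hu.le, ← inv_sqrt_eq_rpow]; ring
    rw [hK, abs_of_nonneg (by positivity)]
    have h1 : (1:ℝ)/(2*t) ≤ 1/(2*E₀) := by
      apply one_div_le_one_div_of_le (by linarith) (by linarith)
    have h2 : Real.sqrt u ≤ Real.sqrt E₁ := Real.sqrt_le_sqrt hu'
    have h3 : (0:ℝ) ≤ (t-u) ^ (-((1:ℝ)/2)) := Real.rpow_nonneg htu.le _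
    calc 1/(2*t) * (Real.sqrt u * (t-u) ^ (-((1:ℝ)/2)))
        ≤ 1/(2*E₀) * (Real.sqrt E₁ * (t-u) ^ (-((1:ℝ)/2))) := by
          apply mul_le_mul h1 (mul_le_mul_of_nonneg_right h2 h3) (by positivity) (by positivity)
      _ = Real.sqrt E₁ / (2*E₀) * (t - u) ^ (-((1:ℝ)/2)) := by ring


lemma measurable_Kk : Measurable (Function.uncurry Kk) := by
  unfold Function.uncurry Kk
  fun_prop

lemma measurable_Kk_t (u : ℝ) : Measurable (fun t => Kk t u) := by
  unfold Kk; fun_prop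

lemma measurable_Kk_u (t : ℝ) : Measurable (fun u => Kk t u) := by
  unfold Kk; fun_prop

lemma intervalIntegrable_rpow_shift (u a b : ℝ) :
    IntervalIntegrable (fun t => (t - u) ^ (-((1:ℝ)/2))) volume a b := by
  have := (intervalIntegral.intervalIntegrable_rpow' (r := -((1:ℝ)/2)) (by norm_num)
      (a := a - u) (b := b - u)).comp_sub_right u
  simpa using this

lemma intervalIntegrable_rpow_shift' (t a b : ℝ) :
    IntervalIntegrable (fun u => (t - u) ^ (-((1:ℝ)/2))) volume a b := by
  have := (intervalIntegral.intervalIntegrable_rpow' (r := -((1:ℝ)/2)) (by norm_num)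
      (a := t - a) (b := t - b)).comp_sub_left t
  simpa using this


lemma hasDerivAt_phi {u t : ℝ} (hu : 0 < u) (ht : u < t) :
    HasDerivAt (fun e => Real.arctan (Real.sqrt ((e - u) / u))) (Kk t u) t := by
  have hx : 0 < (t - u) / u := div_pos (by linarith) hu
  have h1 : HasDerivAt (fun e : ℝ => (e - u) / u) (1/u) t := by
    simpa using ((hasDerivAt_id t).sub_const u).div_const u
  have h2 : HasDerivAt Real.sqrt (1 / (2 * Real.sqrt ((t-u)/u))) ((t-u)/u) :=
    Real.hasDerivAt_sqrt (ne_of_gt hx)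
  have h3 : HasDerivAt Real.arctan
      (1 / (1 + (Real.sqrt ((t-u)/u))^2)) (Real.sqrt ((t-u)/u)) :=
    Real.hasDerivAt_arctan _
  have := (h3.comp t (h2.comp t h1))
  refine this.congr_deriv (Eq.symm ?_)
  have hs : Real.sqrt ((t-u)/u) ^ 2 = (t-u)/u := Real.sq_sqrt hx.le
  rw [hs]
  have h4 : Real.sqrt ((t-u)/u) = Real.sqrt (t-u) / Real.sqrt u :=
    Real.sqrt_div (by linarith) u
  have h5 : Real.sqrt (u/(t-u)) = Real.sqrt u / Real.sqrt (t-u) :=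
    Real.sqrt_div hu.le _
  have hsu : Real.sqrt u * Real.sqrt u = u := Real.mul_self_sqrt hu.le
  have hst : Real.sqrt (t-u) * Real.sqrt (t-u) = t - u := Real.mul_self_sqrt (by linarith)
  have hsu0 : Real.sqrt u ≠ 0 := by positivity
  have hst0 : Real.sqrt (t-u) ≠ 0 := by
    have : 0 < t - u := by linarith
    positivity
  have hu0 : u ≠ 0 := ne_of_gt hu
  have ht0 : t ≠ 0 := ne_of_gt (lt_trans hu ht)
  rw [Kk, h4, h5]
  field_simp
  ring_nf
  rw [mul_inv_cancel₀ ht0]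


lemma intervalIntegrable_Kk_t {E₀ E₁ u a b : ℝ} (hE₀ : 0 < E₀) (hu : 0 < u) (hu' : u ≤ E₁)
    (ha : E₀ ≤ a) (hab : a ≤ b) : IntervalIntegrable (fun t => Kk t u) volume a b := by
  apply ((intervalIntegrable_rpow_shift u a b).const_mul (Real.sqrt E₁ / (2*E₀))).mono_fun'
    (measurable_Kk_t u).aestronglyMeasurable
  rw [Filter.EventuallyLE, ae_restrict_iff' measurableSet_uIoc]
  apply Filter.Eventually.of_forall
  intro t htI
  rw [uIoc_of_le hab] at htI
  exact Kk_abs_le hE₀ (le_of_lt (lt_of_le_of_lt ha htI.1)) hu hu'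

lemma intervalIntegrable_Kk_u {E₀ E₁ t a b : ℝ} (hE₀ : 0 < E₀) (ht : E₀ ≤ t) (h0a : 0 < a)
    (hb : b ≤ E₁) (hab : a ≤ b) : IntervalIntegrable (fun u => Kk t u) volume a b := by
  apply ((intervalIntegrable_rpow_shift' t a b).const_mul (Real.sqrt E₁ / (2*E₀))).mono_fun'
    (measurable_Kk_u t).aestronglyMeasurable
  rw [Filter.EventuallyLE, ae_restrict_iff' measurableSet_uIoc]
  apply Filter.Eventually.of_forall
  intro u huI
  rw [uIoc_of_le hab] at huI
  exact Kk_abs_le hE₀ ht (lt_trans h0a huI.1) (le_trans huI.2 hb)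

lemma rpow_half_le_sqrt {E₁ x : ℝ} (hE₁ : 0 ≤ E₁) (hx : x ≤ E₁) :
    x ^ ((1:ℝ)/2) ≤ Real.sqrt E₁ := by
  rcases le_or_gt x 0 with h | h
  · rw [rpow_half_nonpos h]; exact Real.sqrt_nonneg _
  · rw [← Real.sqrt_eq_rpow]; exact Real.sqrt_le_sqrt hx

lemma integral_rpow_shift_le {E₀ E₁ u e : ℝ} (hE₀ : 0 < E₀) (hu : E₀ < u) (he' : e ≤ E₁)
    (hE₁ : 0 ≤ E₁) :
    ∫ t in E₀..e, (t-u) ^ (-((1:ℝ)/2)) ≤ 2 * Real.sqrt E₁ := by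
  rw [intervalIntegral.integral_comp_sub_right (fun x => x ^ (-((1:ℝ)/2))) u,
    integral_rpow (Or.inl (by norm_num))]
  have h1 : (E₀ - u) ^ (-((1:ℝ)/2) + 1) = 0 := by
    rw [show -((1:ℝ)/2) + 1 = 1/2 by norm_num]
    exact rpow_half_nonpos (by linarith)
  have h2 : (e - u) ^ (-((1:ℝ)/2) + 1) ≤ Real.sqrt E₁ := by
    rw [show -((1:ℝ)/2) + 1 = 1/2 by norm_num]
    exact rpow_half_le_sqrt hE₁ (by linarith)
  rw [h1]
  rw [show -((1:ℝ)/2) + 1 = 1/2 by norm_num] at h2 ⊢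
  linarith

lemma integral_rpow_shift_le' {E₀ E₁ t : ℝ} (hE₀ : 0 < E₀) (ht : E₀ < t) (ht' : t ≤ E₁) :
    ∫ u in E₀..E₁, (t-u) ^ (-((1:ℝ)/2)) ≤ 2 * Real.sqrt E₁ := by
  have hE₁ : 0 ≤ E₁ := le_trans hE₀.le (le_trans ht.le ht')
  rw [intervalIntegral.integral_comp_sub_left (fun x => x ^ (-((1:ℝ)/2))) t,
    integral_rpow (Or.inl (by norm_num))]
  have h1 : (t - E₁) ^ (-((1:ℝ)/2) + 1) = 0 := by
    rw [show -((1:ℝ)/2) + 1 = 1/2 by norm_num]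
    exact rpow_half_nonpos (by linarith)
  have h2 : (t - E₀) ^ (-((1:ℝ)/2) + 1) ≤ Real.sqrt E₁ := by
    rw [show -((1:ℝ)/2) + 1 = 1/2 by norm_num]
    exact rpow_half_le_sqrt hE₁ (by linarith)
  rw [h1]
  rw [show -((1:ℝ)/2) + 1 = 1/2 by norm_num] at h2 ⊢
  linarith

lemma arctan_eq_integral_Kk {E₀ E₁ u e : ℝ} (hE₀ : 0 < E₀) (hu : E₀ ≤ u) (hu' : u ≤ E₁)
    (he : E₀ ≤ e) :
    Real.arctan (Real.sqrt ((e - u) / u)) = ∫ t in E₀..e, Kk t u := by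
  have hu0 : 0 < u := lt_of_lt_of_le hE₀ hu
  rcases le_or_gt e u with h | h
  · rw [arctan_sqrt_zero hu0 h]
    have : ∫ t in E₀..e, Kk t u = ∫ _t in E₀..e, (0:ℝ) := by
      apply intervalIntegral.integral_congr
      intro t htI
      rw [uIcc_of_le he] at htI
      exact Kk_zero hu0 (le_trans htI.2 h)
    rw [this, intervalIntegral.integral_zero]
  · have h1 : ∫ t in E₀..u, Kk t u = 0 := by
      have : ∫ t in E₀..u, Kk t u = ∫ _t in E₀..u, (0:ℝ) := by
        apply intervalIntegral.integral_congr
        intro t htI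
        rw [uIcc_of_le hu] at htI
        exact Kk_zero hu0 htI.2
      rw [this, intervalIntegral.integral_zero]
    have h2 : ∫ t in u..e, Kk t u =
        Real.arctan (Real.sqrt ((e - u) / u)) - Real.arctan (Real.sqrt ((u - u) / u)) := by
      apply intervalIntegral.integral_eq_sub_of_hasDeriv_right_of_le h.le
      · exact (Real.continuous_arctan.comp (Real.continuous_sqrt.comp
          ((continuous_id.sub continuous_const).div_const u))).continuousOn
      · intro t ht
        exact (hasDerivAt_phi hu0 ht.1).hasDerivWithinAt
      · exact intervalIntegrable_Kk_t hE₀ hu0 hu' hu h.le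
    rw [← intervalIntegral.integral_add_adjacent_intervals
      (intervalIntegrable_Kk_t hE₀ hu0 hu' le_rfl hu)
      (intervalIntegrable_Kk_t hE₀ hu0 hu' hu h.le), h1, h2]
    simp

lemma integral_abs_Kk_le {E₀ E₁ u e : ℝ} (hE₀ : 0 < E₀) (hu : E₀ < u) (hu' : u ≤ E₁)
    (he : E₀ ≤ e) (he' : e ≤ E₁) : ∫ t in E₀..e, |Kk t u| ≤ E₁ / E₀ := by
  have hu0 : 0 < u := lt_trans hE₀ hu
  have hE₁0 : 0 < E₁ := lt_of_lt_of_le hu0 hu'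
  have hIK : IntervalIntegrable (fun t => Kk t u) volume E₀ e :=
    intervalIntegrable_Kk_t hE₀ hu0 hu' le_rfl he
  have hIb : IntervalIntegrable
      (fun t => Real.sqrt E₁ / (2*E₀) * (t - u) ^ (-((1:ℝ)/2))) volume E₀ e :=
    (intervalIntegrable_rpow_shift u E₀ e).const_mul _
  calc ∫ t in E₀..e, |Kk t u|
      ≤ ∫ t in E₀..e, Real.sqrt E₁ / (2*E₀) * (t - u) ^ (-((1:ℝ)/2)) := by
        apply intervalIntegral.integral_mono_on he hIK.abs hIb
        intro t ht
        exact Kk_abs_le hE₀ ht.1 hu0 hu'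
    _ = Real.sqrt E₁ / (2*E₀) * ∫ t in E₀..e, (t - u) ^ (-((1:ℝ)/2)) :=
        intervalIntegral.integral_const_mul _ _
    _ ≤ Real.sqrt E₁ / (2*E₀) * (2 * Real.sqrt E₁) := by
        apply mul_le_mul_of_nonneg_left (integral_rpow_shift_le hE₀ hu he' hE₁0.le)
        positivity
    _ = Real.sqrt E₁ * Real.sqrt E₁ / E₀ := by ring
    _ = E₁ / E₀ := by rw [Real.mul_self_sqrt hE₁0.le]

lemma integral_abs_Kk_le' {E₀ E₁ t : ℝ} (hE₀ : 0 < E₀) (hE : E₀ < E₁) (ht : E₀ < t)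
    (ht' : t ≤ E₁) : ∫ u in E₀..E₁, |Kk t u| ≤ E₁ / E₀ := by
  have hE₁0 : 0 < E₁ := lt_trans hE₀ hE
  have hIK : IntervalIntegrable (fun u => Kk t u) volume E₀ E₁ :=
    intervalIntegrable_Kk_u hE₀ ht.le hE₀ le_rfl hE.le
  have hIb : IntervalIntegrable
      (fun u => Real.sqrt E₁ / (2*E₀) * (t - u) ^ (-((1:ℝ)/2))) volume E₀ E₁ :=
    (intervalIntegrable_rpow_shift' t E₀ E₁).const_mul _
  calc ∫ u in E₀..E₁, |Kk t u|
      ≤ ∫ u in E₀..E₁, Real.sqrt E₁ / (2*E₀) * (t - u) ^ (-((1:ℝ)/2)) := by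
        apply intervalIntegral.integral_mono_on hE.le hIK.abs hIb
        intro u hu
        exact Kk_abs_le hE₀ ht.le (lt_of_lt_of_le hE₀ hu.1) hu.2
    _ = Real.sqrt E₁ / (2*E₀) * ∫ u in E₀..E₁, (t - u) ^ (-((1:ℝ)/2)) :=
        intervalIntegral.integral_const_mul _ _
    _ ≤ Real.sqrt E₁ / (2*E₀) * (2 * Real.sqrt E₁) := by
        apply mul_le_mul_of_nonneg_left (integral_rpow_shift_le' hE₀ ht ht')
        positivity
    _ = Real.sqrt E₁ * Real.sqrt E₁ / E₀ := by ring
    _ = E₁ / E₀ := by rw [Real.mul_self_sqrt hE₁0.le]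

theorem aux_main (E₀ E₁ : ℝ) (hE₀ : 0 < E₀) (hE : E₀ < E₁) (g : ℝ → ℝ)
    (hgc : Continuous g) (M : ℝ) (hM : ∀ x, |g x| ≤ M) :
    ∀ E ∈ Ioo E₀ E₁,
      HasDerivAt (fun e => ∫ u in E₀..e, Real.arctan (Real.sqrt ((e - u) / u)) * g u)
        ((1/(2*E)) * ∫ u in E₀..E, Real.sqrt (u / (E - u)) * g u) E := by
  intro E hEm
  obtain ⟨hE1, hE2⟩ := hEm
  have hM0 : 0 ≤ M := le_trans (abs_nonneg _) (hM 0)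
  have hE₁0 : 0 < E₁ := lt_trans hE₀ hE
  set H : ℝ → ℝ := fun t => ∫ u in Ioc E₀ E₁, Kk t u * g u with hH
  -- measurability
  have hKgmeas : Measurable (fun p : ℝ × ℝ => Kk p.1 p.2 * g p.2) :=
    measurable_Kk.mul (hgc.measurable.comp measurable_snd)
  have hHmeas : AEStronglyMeasurable H volume := by
    have h : AEStronglyMeasurable (fun p : ℝ × ℝ => Kk p.1 p.2 * g p.2)
        (volume.prod (volume.restrict (Ioc E₀ E₁))) := hKgmeas.aestronglyMeasurable
    exact h.integral_prod_right'
  -- Step 1 : representation of G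
  have step1 : ∀ e ∈ Ioo E₀ E₁,
      (∫ u in E₀..e, Real.arctan (Real.sqrt ((e - u) / u)) * g u) = ∫ t in E₀..e, H t := by
    intro e hem
    obtain ⟨he1, he2⟩ := hem
    have he0 : E₀ ≤ e := he1.le
    have hcontA : ∀ a b : ℝ, a ≤ b → E₀ ≤ a → b ≤ E₁ →
        IntervalIntegrable (fun u => Real.arctan (Real.sqrt ((e - u) / u)) * g u) volume a b := by
      intro a b hab ha hb
      apply ContinuousOn.intervalIntegrable
      apply ContinuousOn.mul _ hgc.continuousOn
      apply Real.continuous_arctan.comp_continuousOn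
      apply Real.continuous_sqrt.comp_continuousOn
      apply ContinuousOn.div (continuous_const.sub continuous_id).continuousOn continuousOn_id
      intro x hx
      rw [uIcc_of_le hab] at hx
      have : 0 < x := lt_of_lt_of_le hE₀ (le_trans ha hx.1)
      exact ne_of_gt this
    have e1 : (∫ u in E₀..e, Real.arctan (Real.sqrt ((e - u) / u)) * g u)
        = ∫ u in E₀..E₁, Real.arctan (Real.sqrt ((e - u) / u)) * g u := by
      rw [← intervalIntegral.integral_add_adjacent_intervals (hcontA E₀ e he0 le_rfl he2.le)
        (hcontA e E₁ he2.le he0 le_rfl)]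
      have h0 : (∫ u in e..E₁, Real.arctan (Real.sqrt ((e - u) / u)) * g u) = 0 := by
        have : ∀ u ∈ uIcc e E₁, Real.arctan (Real.sqrt ((e - u) / u)) * g u = 0 := by
          intro u hu
          rw [uIcc_of_le he2.le] at hu
          rw [arctan_sqrt_zero (lt_of_lt_of_le (lt_trans hE₀ he1) hu.1) hu.1, zero_mul]
        rw [intervalIntegral.integral_congr this, intervalIntegral.integral_zero]
      rw [h0, add_zero]
    have e2 : (∫ u in E₀..E₁, Real.arctan (Real.sqrt ((e - u) / u)) * g u)
        = ∫ u in E₀..E₁, (∫ t in E₀..e, Kk t u) * g u := by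
      apply intervalIntegral.integral_congr
      intro u hu
      rw [uIcc_of_le hE.le] at hu
      show Real.arctan (Real.sqrt ((e - u) / u)) * g u = (∫ t in E₀..e, Kk t u) * g u
      rw [arctan_eq_integral_Kk hE₀ hu.1 hu.2 he0]
    have hInt : Integrable (Function.uncurry (fun u t => Kk t u * g u))
        ((volume.restrict (Ioc E₀ E₁)).prod (volume.restrict (Ioc E₀ e))) := by
      have hm : AEStronglyMeasurable (Function.uncurry (fun u t => Kk t u * g u))
          ((volume.restrict (Ioc E₀ E₁)).prod (volume.restrict (Ioc E₀ e))) := by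
        apply Measurable.aestronglyMeasurable
        exact (measurable_Kk.comp (measurable_snd.prodMk measurable_fst)).mul
          (hgc.measurable.comp measurable_fst)
      rw [integrable_prod_iff hm]
      constructor
      · rw [ae_restrict_iff' measurableSet_Ioc]
        refine Filter.Eventually.of_forall fun u hu => ?_
        have h := (intervalIntegrable_Kk_t (E₁ := E₁) hE₀ (lt_trans hE₀ hu.1) hu.2
          le_rfl he0).mul_const (g u)
        exact (intervalIntegrable_iff_integrableOn_Ioc_of_le he0).1 h
      · apply Integrable.mono' (integrable_const (M * (E₁ / E₀)))
        · exact hm.norm.integral_prod_right'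
        · rw [ae_restrict_iff' measurableSet_Ioc]
          refine Filter.Eventually.of_forall fun u hu => ?_
          simp only [Function.uncurry]
          have h1 : ‖∫ t in Ioc E₀ e, ‖Kk t u * g u‖‖ = ∫ t in Ioc E₀ e, ‖Kk t u * g u‖ :=
            Real.norm_of_nonneg (integral_nonneg fun t => norm_nonneg _)
          rw [h1]
          have h2 : (∫ t in Ioc E₀ e, ‖Kk t u * g u‖) = ∫ t in E₀..e, |Kk t u| * |g u| := by
            rw [intervalIntegral.integral_of_le he0]
            refine integral_congr_ae (Filter.Eventually.of_forall fun t => ?_)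
            simp [Real.norm_eq_abs, abs_mul]
          rw [h2, intervalIntegral.integral_mul_const]
          have h3 : (∫ t in E₀..e, |Kk t u|) ≤ E₁ / E₀ :=
            integral_abs_Kk_le hE₀ hu.1 hu.2 he0 he2.le
          have h4 : 0 ≤ ∫ t in E₀..e, |Kk t u| :=
            intervalIntegral.integral_nonneg he0 fun t _ => abs_nonneg _
          calc (∫ t in E₀..e, |Kk t u|) * |g u| ≤ (E₁ / E₀) * M :=
                mul_le_mul h3 (hM u) (abs_nonneg _) (by positivity)
            _ = M * (E₁ / E₀) := by ring
    have e3 : (∫ u in E₀..E₁, (∫ t in E₀..e, Kk t u) * g u)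
        = ∫ t in Ioc E₀ e, H t := by
      rw [intervalIntegral.integral_of_le hE.le]
      simp only [intervalIntegral.integral_of_le he0]
      have e4 : (∫ u in Ioc E₀ E₁, (∫ t in Ioc E₀ e, Kk t u) * g u)
          = ∫ u in Ioc E₀ E₁, ∫ t in Ioc E₀ e, Kk t u * g u := by
        refine integral_congr_ae (Filter.Eventually.of_forall fun u => ?_)
        exact (MeasureTheory.integral_mul_const (g u) (fun t => Kk t u)).symm
      rw [e4]
      exact integral_integral_swap hInt
    rw [e1, e2, e3, intervalIntegral.integral_of_le he0]
  -- Step 2 : interval integrability of H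
  have step2 : IntervalIntegrable H volume E₀ E := by
    rw [intervalIntegrable_iff_integrableOn_Ioc_of_le hE1.le]
    apply Integrable.mono' (integrable_const (M * (E₁ / E₀))) hHmeas.restrict
    rw [ae_restrict_iff' measurableSet_Ioc]
    refine Filter.Eventually.of_forall fun t ht => ?_
    have h0 : ‖H t‖ ≤ ∫ u in Ioc E₀ E₁, ‖Kk t u * g u‖ := norm_integral_le_integral_norm _
    refine le_trans h0 ?_
    have h2 : (∫ u in Ioc E₀ E₁, ‖Kk t u * g u‖) = ∫ u in E₀..E₁, |Kk t u| * |g u| := by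
      rw [intervalIntegral.integral_of_le hE.le]
      refine integral_congr_ae (Filter.Eventually.of_forall fun u => ?_)
      simp [Real.norm_eq_abs, abs_mul]
    rw [h2]
    have hIK : IntervalIntegrable (fun u => Kk t u) volume E₀ E₁ :=
      intervalIntegrable_Kk_u hE₀ (le_of_lt ht.1) hE₀ le_rfl hE.le
    calc (∫ u in E₀..E₁, |Kk t u| * |g u|) ≤ ∫ u in E₀..E₁, |Kk t u| * M := by
          apply intervalIntegral.integral_mono_on hE.le (hIK.abs.mul_continuousOn ?_)
            (hIK.abs.mul_const M)
          · intro u hu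
            exact mul_le_mul_of_nonneg_left (hM u) (abs_nonneg _)
          · exact (continuous_abs.comp hgc).continuousOn
      _ = (∫ u in E₀..E₁, |Kk t u|) * M := intervalIntegral.integral_mul_const _ _
      _ ≤ (E₁ / E₀) * M :=
          mul_le_mul_of_nonneg_right (integral_abs_Kk_le' hE₀ hE ht.1 (le_trans ht.2 hE2.le)) hM0
      _ = M * (E₁ / E₀) := by ring
  -- Step 4 : value of H at E
  have step4 : H E = (1/(2*E)) * ∫ u in E₀..E, Real.sqrt (u / (E - u)) * g u := by
    have hII1 : IntervalIntegrable (fun u => Kk E u * g u) volume E₀ E :=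
      (intervalIntegrable_Kk_u (E₁ := E₁) hE₀ hE1.le hE₀ hE2.le hE1.le).mul_continuousOn
        hgc.continuousOn
    have hII2 : IntervalIntegrable (fun u => Kk E u * g u) volume E E₁ :=
      (intervalIntegrable_Kk_u (E₁ := E₁) hE₀ hE1.le (lt_trans hE₀ hE1) le_rfl
        hE2.le).mul_continuousOn hgc.continuousOn
    have h0 : (∫ u in E..E₁, Kk E u * g u) = 0 := by
      have h00 : ∀ u ∈ uIcc E E₁, Kk E u * g u = 0 := fun u hu => by
        rw [uIcc_of_le hE2.le] at hu
        rw [Kk_zero (lt_of_lt_of_le (lt_trans hE₀ hE1) hu.1) hu.1, zero_mul]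
      rw [intervalIntegral.integral_congr h00, intervalIntegral.integral_zero]
    have h1 : H E = ∫ u in E₀..E, Kk E u * g u := by
      rw [hH]
      show (∫ u in Ioc E₀ E₁, Kk E u * g u) = _
      rw [← intervalIntegral.integral_of_le hE.le,
        ← intervalIntegral.integral_add_adjacent_intervals hII1 hII2, h0, add_zero]
    rw [h1, ← intervalIntegral.integral_const_mul]
    apply intervalIntegral.integral_congr
    intro u _
    show Kk E u * g u = 1/(2*E) * (Real.sqrt (u/(E-u)) * g u)
    rw [Kk]; ring
  -- Step 3 : continuity of H at E
  have step3 : ContinuousAt H E := by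
    have claim3a : ∀ t ∈ Ioo E₀ E₁, H t = Real.sqrt (t - E₀)/(2*t) *
        ∫ s in (0:ℝ)..1, Real.sqrt (((t - E₀)*s + E₀)/(1-s)) * g ((t - E₀)*s + E₀) := by
      intro t htm
      obtain ⟨ht1, ht2⟩ := htm
      have ht0 : 0 < t := lt_trans hE₀ ht1
      have hct : 0 < t - E₀ := by linarith
      have hII1 : IntervalIntegrable (fun u => Kk t u * g u) volume E₀ t :=
        (intervalIntegrable_Kk_u (E₁ := E₁) hE₀ ht1.le hE₀ ht2.le ht1.le).mul_continuousOn
          hgc.continuousOn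
      have hII2 : IntervalIntegrable (fun u => Kk t u * g u) volume t E₁ :=
        (intervalIntegrable_Kk_u (E₁ := E₁) hE₀ ht1.le ht0 le_rfl ht2.le).mul_continuousOn
          hgc.continuousOn
      have h0 : (∫ u in t..E₁, Kk t u * g u) = 0 := by
        have h00 : ∀ u ∈ uIcc t E₁, Kk t u * g u = 0 := fun u hu => by
          rw [uIcc_of_le ht2.le] at hu
          rw [Kk_zero (lt_of_lt_of_le ht0 hu.1) hu.1, zero_mul]
        rw [intervalIntegral.integral_congr h00, intervalIntegral.integral_zero]
      have h1 : H t = ∫ u in E₀..t, Kk t u * g u := by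
        rw [hH]
        show (∫ u in Ioc E₀ E₁, Kk t u * g u) = _
        rw [← intervalIntegral.integral_of_le hE.le,
          ← intervalIntegral.integral_add_adjacent_intervals hII1 hII2, h0, add_zero]
      have hsub := intervalIntegral.integral_comp_mul_add (a := (0:ℝ)) (b := 1)
        (fun u => Kk t u * g u) (ne_of_gt hct) E₀
      rw [show (t - E₀) * 0 + E₀ = E₀ by ring, show (t - E₀) * 1 + E₀ = t by ring] at hsub
      have hpt : ∀ s ∈ uIcc (0:ℝ) 1,
          Kk t ((t - E₀)*s + E₀) * g ((t - E₀)*s + E₀)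
            = 1/(2*t) * (Real.sqrt (t - E₀))⁻¹ *
              (Real.sqrt (((t - E₀)*s + E₀)/(1-s)) * g ((t - E₀)*s + E₀)) := by
        intro s hs
        rw [uIcc_of_le zero_le_one] at hs
        have hu0 : 0 ≤ (t - E₀)*s + E₀ := by nlinarith [hs.1]
        have hden : t - ((t - E₀)*s + E₀) = (1-s)*(t-E₀) := by ring
        have h1s : (0:ℝ) ≤ 1 - s := by linarith [hs.2]
        have hq : ((t - E₀)*s + E₀) / ((1-s)*(t-E₀)) = (((t - E₀)*s + E₀)/(1-s))/(t-E₀) := by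
          rw [div_div]
        rw [Kk, hden, hq, Real.sqrt_div (div_nonneg hu0 h1s) (t-E₀)]
        ring
      rw [intervalIntegral.integral_congr hpt, intervalIntegral.integral_const_mul,
        eq_comm, inv_smul_eq_iff₀ (ne_of_gt hct)] at hsub
      rw [h1, hsub, smul_eq_mul]
      have hs0 : Real.sqrt (t - E₀) ≠ 0 := by positivity
      have hss : Real.sqrt (t-E₀) * Real.sqrt (t-E₀) = t - E₀ := Real.mul_self_sqrt hct.le
      nth_rewrite 1 [← hss]
      field_simp
    have claim3b : ContinuousAt (fun t => ∫ s in (0:ℝ)..1,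
        Real.sqrt (((t - E₀)*s + E₀)/(1-s)) * g ((t - E₀)*s + E₀)) E := by
      apply intervalIntegral.continuousAt_of_dominated_interval
        (bound := fun s => Real.sqrt E₁ * (Real.sqrt (1-s))⁻¹ * M)
      · refine Filter.Eventually.of_forall fun t => ?_
        apply Measurable.aestronglyMeasurable
        have m1 : Measurable fun s : ℝ => ((t - E₀)*s + E₀)/(1-s) := by fun_prop
        exact (Real.continuous_sqrt.measurable.comp m1).mul (hgc.measurable.comp (by fun_prop))
      · filter_upwards [isOpen_Ioo.mem_nhds (⟨hE1, hE2⟩ : E ∈ Ioo E₀ E₁)] with t ht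
        refine Filter.Eventually.of_forall fun s hs => ?_
        rw [uIoc_of_le zero_le_one] at hs
        obtain ⟨hs1, hs2⟩ := hs
        have hct : 0 < t - E₀ := by linarith [ht.1]
        have hu1 : 0 < (t - E₀)*s + E₀ := by nlinarith
        have hu2 : (t - E₀)*s + E₀ ≤ E₁ := by nlinarith [ht.2]
        rcases eq_or_lt_of_le hs2 with rfl | hs3
        · simp
        · have hss : 0 < 1 - s := by linarith
          rw [Real.norm_eq_abs, abs_mul, abs_of_nonneg (Real.sqrt_nonneg _)]
          have hb1 : Real.sqrt (((t - E₀)*s + E₀)/(1-s)) ≤ Real.sqrt E₁ * (Real.sqrt (1-s))⁻¹ := by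
            rw [← div_eq_mul_inv, ← Real.sqrt_div hE₁0.le]
            apply Real.sqrt_le_sqrt
            gcongr
          exact mul_le_mul hb1 (hM _) (abs_nonneg _) (by positivity)
      · have heq : (fun s : ℝ => Real.sqrt E₁ * (Real.sqrt (1-s))⁻¹ * M)
            = fun s => Real.sqrt E₁ * (1-s) ^ (-((1:ℝ)/2)) * M :=
          funext fun s => by rw [inv_sqrt_eq_rpow]
        rw [heq]
        have h2 : IntervalIntegrable (fun s : ℝ => (1-s) ^ (-((1:ℝ)/2))) volume 0 1 := by
          have := (intervalIntegral.intervalIntegrable_rpow' (r := -((1:ℝ)/2)) (by norm_num)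
            (a := (1:ℝ)) (b := 0)).comp_sub_left 1
          simpa using this
        exact (h2.const_mul _).mul_const _
      · refine Filter.Eventually.of_forall fun s hs => ?_
        rw [uIoc_of_le zero_le_one] at hs
        rcases eq_or_lt_of_le hs.2 with rfl | hs3
        · simp only [sub_self, div_zero, Real.sqrt_zero, zero_mul]
          exact continuousAt_const
        · have c1 : Continuous fun t : ℝ => ((t - E₀)*s + E₀)/(1-s) :=
            (((continuous_id.sub continuous_const).mul continuous_const).add
              continuous_const).div_const _
          exact ((Real.continuous_sqrt.comp c1).mul
            (hgc.comp (((continuous_id.sub continuous_const).mul continuous_const).add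
              continuous_const))).continuousAt
    have hc1 : ContinuousAt (fun t => Real.sqrt (t - E₀)/(2*t)) E := by
      apply ContinuousAt.div
      · exact (Real.continuous_sqrt.comp (continuous_id.sub continuous_const)).continuousAt
      · exact (continuous_const.mul continuous_id).continuousAt
      · have : (0:ℝ) < 2*E := by linarith
        exact ne_of_gt this
    have hcong : (fun t => Real.sqrt (t - E₀)/(2*t) *
        ∫ s in (0:ℝ)..1, Real.sqrt (((t - E₀)*s + E₀)/(1-s)) * g ((t - E₀)*s + E₀))
        =ᶠ[𝓝 E] H := by
      filter_upwards [isOpen_Ioo.mem_nhds (⟨hE1, hE2⟩ : E ∈ Ioo E₀ E₁)] with t ht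
      exact (claim3a t ht).symm
    exact (hc1.mul claim3b).congr hcong
  have hSM : StronglyMeasurableAtFilter H (𝓝 E) := ⟨univ, univ_mem, hHmeas.restrict⟩
  have hD := intervalIntegral.integral_hasDerivAt_right step2 hSM step3
  have hD' : HasDerivAt (fun e => ∫ t in E₀..e, H t)
      ((1/(2*E)) * ∫ u in E₀..E, Real.sqrt (u / (E - u)) * g u) E := by
    rw [← step4]; exact hD
  have hEq : (fun e => ∫ u in E₀..e, Real.arctan (Real.sqrt ((e - u) / u)) * g u)
      =ᶠ[𝓝 E] fun e => ∫ t in E₀..e, H t := by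
    filter_upwards [isOpen_Ioo.mem_nhds ⟨hE1, hE2⟩] with e he using step1 e he
  exact hEq.hasDerivAt_iff.2 hD'


/-- Differentiation of the arctangent Abel kernel:
`G(E) = ∫_{E₀}^E arctan(√((E−u)/u)) g(u) du` has
`G′(E) = (1/(2E)) ∫_{E₀}^E √(u/(E−u)) g(u) du`. -/
theorem deriv_arctan_abel_kernel (E₀ E₁ : ℝ) (hE₀ : 0 < E₀) (hE : E₀ < E₁)
    (g : ℝ → ℝ) (hg : ContinuousOn g (Icc E₀ E₁)) :
    ∀ E ∈ Ioo E₀ E₁,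
      HasDerivAt (fun e => ∫ u in E₀..e, Real.arctan (Real.sqrt ((e - u) / u)) * g u)
        ((1/(2*E)) * ∫ u in E₀..E, Real.sqrt (u / (E - u)) * g u) E := by
  intro E hEm
  set g' : ℝ → ℝ := fun x => g (max E₀ (min x E₁)) with hg'
  have hmem : ∀ x : ℝ, max E₀ (min x E₁) ∈ Icc E₀ E₁ := fun x =>
    ⟨le_max_left _ _, max_le hE.le (min_le_right _ _)⟩
  have hg'c : Continuous g' :=
    hg.comp_continuous (continuous_const.max (continuous_id.min continuous_const)) hmem
  have hgg' : ∀ x ∈ Icc E₀ E₁, g x = g' x := fun x hx => by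
    rw [hg']
    simp only
    rw [min_eq_left hx.2, max_eq_right hx.1]
  obtain ⟨M, hMb⟩ := (isCompact_Icc (a := E₀) (b := E₁)).exists_bound_of_continuousOn hg
  have hM : ∀ x, |g' x| ≤ M := fun x => by
    rw [hg']
    simp only
    rw [← Real.norm_eq_abs]
    exact hMb _ (hmem x)
  have hmain := aux_main E₀ E₁ hE₀ hE g' hg'c M hM E hEm
  have hEqD : (∫ u in E₀..E, Real.sqrt (u/(E-u)) * g u)
      = ∫ u in E₀..E, Real.sqrt (u/(E-u)) * g' u := by
    apply intervalIntegral.integral_congr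
    intro u hu
    rw [uIcc_of_le hEm.1.le] at hu
    show Real.sqrt (u/(E-u)) * g u = Real.sqrt (u/(E-u)) * g' u
    rw [hgg' u ⟨hu.1, le_trans hu.2 hEm.2.le⟩]
  have hEqF : (fun e => ∫ u in E₀..e, Real.arctan (Real.sqrt ((e - u) / u)) * g u)
      =ᶠ[𝓝 E] (fun e => ∫ u in E₀..e, Real.arctan (Real.sqrt ((e - u) / u)) * g' u) := by
    filter_upwards [isOpen_Ioo.mem_nhds hEm] with e he
    apply intervalIntegral.integral_congr
    intro u hu
    rw [uIcc_of_le he.1.le] at hu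
    show Real.arctan (Real.sqrt ((e - u)/u)) * g u = Real.arctan (Real.sqrt ((e - u)/u)) * g' u
    rw [hgg' u ⟨hu.1, le_trans hu.2 he.2.le⟩]
  rw [show ((1:ℝ)/(2*E)) * ∫ u in E₀..E, Real.sqrt (u / (E - u)) * g u
      = (1/(2*E)) * ∫ u in E₀..E, Real.sqrt (u / (E - u)) * g' u from by rw [hEqD]]
  exact hEqF.hasDerivAt_iff.2 hmain
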